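/- For every ω > 0 there exists ε > 0 such that for all finite simple graphs G, H on the same vertex set with maximum degree at most d, if the edit distance ed(G,H) < ε, then the statistical distance d_s(G,H) < ω. -/

import Mathlib

set_option maxHeartbeats 1600000


open MeasureTheory Filter Topology

/-- A rooted `(r,d)`-ball: a finite connected rooted graph with maximum degree at most `d`
in which every vertex is within distance `rad` of the root. -/
structure Ball (d : ℕ) where
  rad : ℕ
  n : ℕ
  graph : SimpleGraph (Fin n)
  root : Fin n
  conn : graph.Connected
  deg : ∀ v, (graph.neighborSet v).ncard ≤ d
  small : ∀ v, graph.dist root v ≤ rad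

/-- Rooted isomorphism of rooted graphs. -/
def RootedIso {V W : Type*} (G : SimpleGraph V) (x : V) (H : SimpleGraph W) (y : W) : Prop :=
  ∃ e : G ≃g H, e x = y

/-- The vertex set of the ball of radius `r` around `x`. -/
def ballVerts {V : Type*} (G : SimpleGraph V) (r : ℕ) (x : V) : Set V :=
  {y | G.Reachable x y ∧ G.dist x y ≤ r}

lemma rootMemBall {V : Type*} (G : SimpleGraph V) (r : ℕ) (x : V) : x ∈ ballVerts G r x :=
  ⟨SimpleGraph.Reachable.refl x, by simp [SimpleGraph.dist_self]⟩

/-- The rooted `r`-ball of `G` around `x` is rooted-isomorphic to the rooted graph `(H,y)`. -/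
def ballIso {V W : Type*} (G : SimpleGraph V) (r : ℕ) (x : V)
    (H : SimpleGraph W) (y : W) : Prop :=
  RootedIso (G.induce (ballVerts G r x)) ⟨x, rootMemBall G r x⟩ H y

/-- `pfreq G α` is the fraction of vertices of `G` whose rooted `α.rad`-ball is
isomorphic to the rooted ball `α`. -/
noncomputable def pfreq {V : Type*} {d : ℕ} (G : SimpleGraph V) (α : Ball d) : ℝ :=
  ({x : V | ballIso G α.rad x α.graph α.root}).ncard / (Nat.card V)

/-- The statistical distance of two finite graphs with respect to an enumeration `E`
of all rooted `(r,d)`-balls. -/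
noncomputable def ds {d : ℕ} (E : ℕ → Ball d) {V W : Type*}
    (G : SimpleGraph V) (H : SimpleGraph W) : ℝ :=
  ∑' i : ℕ, (1 / 2 : ℝ) ^ (i + 1) * |pfreq G (E i) - pfreq H (E i)|

/-- `E` enumerates all rooted `(r,d)`-balls up to rooted isomorphism. -/
def Covers {d : ℕ} (E : ℕ → Ball d) : Prop :=
  ∀ β : Ball d, ∃ i, (E i).rad = β.rad ∧ RootedIso (E i).graph (E i).root β.graph β.root

/-- Maximum degree of `G` is at most `d`. -/
def DegLe {V : Type*} (G : SimpleGraph V) (d : ℕ) : Prop :=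
  ∀ v, (G.neighborSet v).ncard ≤ d

lemma ncard_biUnion_le' {ι V : Type*} [Finite V] {s : Set ι} (hs : s.Finite)
    (t : ι → Set V) (B : ℕ) (hB : ∀ i, (t i).ncard ≤ B) :
    (⋃ i ∈ s, t i).ncard ≤ s.ncard * B := by
  refine Set.Finite.induction_on (motive := fun s _ => (⋃ i ∈ s, t i).ncard ≤ s.ncard * B) s hs (by simp) ?_
  intro a s ha hs ih
  rw [Set.biUnion_insert]
  calc (t a ∪ ⋃ i ∈ s, t i).ncard ≤ (t a).ncard + (⋃ i ∈ s, t i).ncard :=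
        Set.ncard_union_le _ _
    _ ≤ B + s.ncard * B := Nat.add_le_add (hB a) ih
    _ = (insert a s).ncard * B := by
        rw [Set.ncard_insert_of_notMem ha hs]; ring

lemma ballVerts_zero {V : Type*} (G : SimpleGraph V) (u : V) : ballVerts G 0 u = {u} := by
  ext y
  simp only [ballVerts, Set.mem_setOf_eq, Set.mem_singleton_iff, Nat.le_zero]
  constructor
  · rintro ⟨h1, h2⟩
    exact ((h1.dist_eq_zero_iff).mp h2).symm
  · rintro rfl
    exact ⟨SimpleGraph.Reachable.refl y, SimpleGraph.dist_self⟩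

lemma mem_ballVerts_of_walk {V : Type*} {G : SimpleGraph V} {r : ℕ} {x y : V}
    (p : G.Walk x y) (hp : p.length ≤ r) : y ∈ ballVerts G r x :=
  ⟨⟨p⟩, le_trans (SimpleGraph.dist_le p) hp⟩

lemma ncard_ballVerts_le {V : Type*} [Finite V] {d : ℕ} (G : SimpleGraph V)
    (hG : ∀ v, (G.neighborSet v).ncard ≤ d) :
    ∀ (r : ℕ) (u : V), (ballVerts G r u).ncard ≤ (d + 1) ^ r := by
  intro r
  induction r with
  | zero => intro u; rw [ballVerts_zero]; simp
  | succ r ih =>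
    intro u
    have hsub : ballVerts G (r + 1) u ⊆
        insert u (⋃ w ∈ G.neighborSet u, ballVerts G r w) := by
      rintro y ⟨hr, hdist⟩
      by_cases hy : y = u
      · exact hy ▸ Set.mem_insert _ _
      obtain ⟨p, hp⟩ := hr.exists_walk_length_eq_dist
      cases p with
      | nil => exact absurd rfl (Ne.symm hy)
      | cons h q =>
        refine Set.mem_insert_of_mem _ ?_
        refine Set.mem_biUnion h ?_
        refine mem_ballVerts_of_walk q ?_
        have : q.length + 1 ≤ r + 1 := by
          rw [SimpleGraph.Walk.length_cons] at hp
          omega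
        omega
    calc (ballVerts G (r + 1) u).ncard
        ≤ (insert u (⋃ w ∈ G.neighborSet u, ballVerts G r w)).ncard :=
          Set.ncard_le_ncard hsub (Set.toFinite _)
      _ ≤ (⋃ w ∈ G.neighborSet u, ballVerts G r w).ncard + 1 :=
          Set.ncard_insert_le _ _
      _ ≤ d * (d + 1) ^ r + 1 := by
          have := ncard_biUnion_le' (Set.toFinite (G.neighborSet u))
            (fun w => ballVerts G r w) ((d+1)^r) (fun w => ih w)
          have h2 : (G.neighborSet u).ncard * (d+1)^r ≤ d * (d+1)^r :=
            Nat.mul_le_mul_right _ (hG u)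
          omega
      _ ≤ (d + 1) ^ (r + 1) := by
          have : 1 ≤ (d+1)^r := Nat.one_le_pow _ _ (by omega)
          rw [pow_succ]
          nlinarith

lemma walk_transfer {V : Type*} {G H : SimpleGraph V} :
    ∀ (r : ℕ) (x y : V), G.Reachable x y → G.dist x y ≤ r →
    (∀ z ∈ ballVerts G r x, G.neighborSet z = H.neighborSet z) →
    ∃ q : H.Walk x y, q.length ≤ r := by
  intro r
  induction r with
  | zero =>
    intro x y hr hdist _
    have : y = x := (hr.dist_eq_zero_iff.mp (Nat.le_zero.mp hdist)).symm
    subst this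
    exact ⟨SimpleGraph.Walk.nil, by simp⟩
  | succ r ih =>
    intro x y hr hdist good
    by_cases hxy : y = x
    · subst hxy; exact ⟨SimpleGraph.Walk.nil, by simp⟩
    obtain ⟨p, hp⟩ := hr.symm.exists_walk_length_eq_dist
    rw [SimpleGraph.dist_comm] at hp
    cases p with
    | nil => exact absurd rfl hxy
    | @cons _ w _ h q =>
      rw [SimpleGraph.Walk.length_cons] at hp
      have hqlen : q.length ≤ r := by omega
      have hrw : G.Reachable x w := ⟨q.reverse⟩
      have hdw : G.dist x w ≤ r := by
        have h1 := SimpleGraph.dist_le q.reverse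
        rw [SimpleGraph.Walk.length_reverse] at h1
        exact le_trans h1 hqlen
      obtain ⟨q', hq'⟩ := ih x w hrw hdw (fun z hz =>
        good z ⟨hz.1, le_trans hz.2 (Nat.le_succ r)⟩)
      have hw : w ∈ ballVerts G (r + 1) x := ⟨hrw, le_trans hdw (Nat.le_succ r)⟩
      have hadj : H.Adj w y := by
        have : y ∈ G.neighborSet w := h.symm
        rwa [good w hw] at this
      exact ⟨q'.concat hadj, by rw [SimpleGraph.Walk.length_concat]; omega⟩

lemma ballVerts_eq_of_good {V : Type*} {G H : SimpleGraph V} {r : ℕ} {x : V}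
    (good : ∀ z, z ∈ ballVerts G r x ∪ ballVerts H r x →
      G.neighborSet z = H.neighborSet z) :
    ballVerts G r x = ballVerts H r x := by
  apply Set.Subset.antisymm
  · rintro y ⟨hr, hd⟩
    obtain ⟨q, hq⟩ := walk_transfer r x y hr hd (fun z hz => good z (Or.inl hz))
    exact mem_ballVerts_of_walk q hq
  · rintro y ⟨hr, hd⟩
    obtain ⟨q, hq⟩ := walk_transfer (G := H) (H := G) r x y hr hd
      (fun z hz => (good z (Or.inr hz)).symm)
    exact mem_ballVerts_of_walk q hq

lemma ballIso_iff_of_good {V : Type*} {G H : SimpleGraph V} {r : ℕ} {x : V}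
    (good : ∀ z, z ∈ ballVerts G r x ∪ ballVerts H r x →
      G.neighborSet z = H.neighborSet z)
    {n : ℕ} (K : SimpleGraph (Fin n)) (root : Fin n) :
    ballIso G r x K root ↔ ballIso H r x K root := by
  have hst := ballVerts_eq_of_good good
  have hadj : ∀ a b : V, a ∈ ballVerts G r x → (G.Adj a b ↔ H.Adj a b) := by
    intro a b ha
    rw [← SimpleGraph.mem_neighborSet, ← SimpleGraph.mem_neighborSet,
      good a (Or.inl ha)]
  let e : (G.induce (ballVerts G r x)) ≃g (H.induce (ballVerts H r x)) :=
    { toEquiv := Equiv.setCongr hst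
      map_rel_iff' := by
        intro a b
        simp only [Equiv.setCongr_apply, SimpleGraph.comap_adj, Function.Embedding.coe_subtype]
        exact (hadj a b a.2).symm }
  have hex : e ⟨x, rootMemBall G r x⟩ = ⟨x, rootMemBall H r x⟩ := rfl
  constructor
  · rintro ⟨f, hf⟩
    refine ⟨e.symm.trans f, ?_⟩
    have hsymm : e.symm ⟨x, rootMemBall H r x⟩ = ⟨x, rootMemBall G r x⟩ := by
      rw [← hex]; exact e.symm_apply_apply _
    rw [RelIso.trans_apply, hsymm, hf]
  · rintro ⟨f, hf⟩
    exact ⟨e.trans f, by rw [RelIso.trans_apply, hex, hf]⟩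

lemma mem_ballVerts_comm {V : Type*} {G : SimpleGraph V} {r : ℕ} {x y : V} :
    y ∈ ballVerts G r x ↔ x ∈ ballVerts G r y := by
  simp only [ballVerts, Set.mem_setOf_eq]
  constructor
  · rintro ⟨h1, h2⟩; exact ⟨h1.symm, by rwa [SimpleGraph.dist_comm]⟩
  · rintro ⟨h1, h2⟩; exact ⟨h1.symm, by rwa [SimpleGraph.dist_comm]⟩

lemma nbhdDiff_ncard_le {V : Type*} [Finite V] (G H : SimpleGraph V) :
    ({y | G.neighborSet y ≠ H.neighborSet y}).ncard ≤
      2 * (symmDiff G.edgeSet H.edgeSet).ncard := by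
  have hsub : {y | G.neighborSet y ≠ H.neighborSet y} ⊆
      ⋃ e ∈ symmDiff G.edgeSet H.edgeSet, {v | v ∈ e} := by
    intro y hy
    simp only [Set.mem_setOf_eq, ne_eq] at hy
    have : ∃ z, ¬ (z ∈ G.neighborSet y ↔ z ∈ H.neighborSet y) := by
      by_contra hc
      push_neg at hc
      exact hy (Set.ext fun z => hc z)
    obtain ⟨z, hz⟩ := this
    have hmem : s(y, z) ∈ symmDiff G.edgeSet H.edgeSet := by
      rw [Set.mem_symmDiff]
      simp only [SimpleGraph.mem_edgeSet, SimpleGraph.mem_neighborSet] at hz ⊢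
      tauto
    exact Set.mem_biUnion hmem (Sym2.mem_mk_left y z)
  calc ({y | G.neighborSet y ≠ H.neighborSet y}).ncard
      ≤ (⋃ e ∈ symmDiff G.edgeSet H.edgeSet, {v | v ∈ e}).ncard :=
        Set.ncard_le_ncard hsub (Set.toFinite _)
    _ ≤ (symmDiff G.edgeSet H.edgeSet).ncard * 2 := by
        refine ncard_biUnion_le' (Set.toFinite _) _ 2 ?_
        intro e
        induction e with
        | h a b =>
          have : {v | v ∈ s(a, b)} ⊆ {a, b} := by
            intro v hv
            simp only [Set.mem_setOf_eq, Sym2.mem_iff] at hv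
            simpa using hv
          calc ({v | v ∈ s(a, b)}).ncard ≤ ({a, b} : Set V).ncard :=
                Set.ncard_le_ncard this (Set.toFinite _)
            _ ≤ 2 := (Set.ncard_insert_le _ _).trans (by simp)
    _ = 2 * (symmDiff G.edgeSet H.edgeSet).ncard := by ring

lemma badSet_ncard_le {V : Type*} [Finite V] {d : ℕ} (G H : SimpleGraph V)
    (hG : DegLe G d) (hH : DegLe H d) (r : ℕ) :
    ({x | ∃ y, G.neighborSet y ≠ H.neighborSet y ∧
        (x ∈ ballVerts G r y ∪ ballVerts H r y)}).ncard ≤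
      4 * (d + 1) ^ r * (symmDiff G.edgeSet H.edgeSet).ncard := by
  have heq : {x | ∃ y, G.neighborSet y ≠ H.neighborSet y ∧
      (x ∈ ballVerts G r y ∪ ballVerts H r y)} =
      ⋃ y ∈ {y | G.neighborSet y ≠ H.neighborSet y},
        (ballVerts G r y ∪ ballVerts H r y) := by
    ext x; simp [Set.mem_setOf_eq]
  rw [heq]
  calc (⋃ y ∈ {y | G.neighborSet y ≠ H.neighborSet y},
        (ballVerts G r y ∪ ballVerts H r y)).ncard
      ≤ ({y | G.neighborSet y ≠ H.neighborSet y}).ncard * (2 * (d + 1) ^ r) := by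
        refine ncard_biUnion_le' (Set.toFinite _) _ _ ?_
        intro y
        calc (ballVerts G r y ∪ ballVerts H r y).ncard
            ≤ (ballVerts G r y).ncard + (ballVerts H r y).ncard :=
              Set.ncard_union_le _ _
          _ ≤ (d + 1) ^ r + (d + 1) ^ r :=
              Nat.add_le_add (ncard_ballVerts_le G hG r y) (ncard_ballVerts_le H hH r y)
          _ = 2 * (d + 1) ^ r := by ring
    _ ≤ (2 * (symmDiff G.edgeSet H.edgeSet).ncard) * (2 * (d + 1) ^ r) :=
        Nat.mul_le_mul_right _ (nbhdDiff_ncard_le G H)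
    _ = 4 * (d + 1) ^ r * (symmDiff G.edgeSet H.edgeSet).ncard := by ring

lemma pfreq_nonneg {V : Type*} {d : ℕ} (G : SimpleGraph V) (α : Ball d) :
    0 ≤ pfreq G α :=
  div_nonneg (Nat.cast_nonneg _) (Nat.cast_nonneg _)

lemma pfreq_le_one {V : Type*} [Finite V] {d : ℕ} (G : SimpleGraph V) (α : Ball d) :
    pfreq G α ≤ 1 := by
  unfold pfreq
  rcases Nat.eq_zero_or_pos (Nat.card V) with h | h
  · simp [h]
  · rw [div_le_one (by exact_mod_cast h)]
    have : ({x : V | ballIso G α.rad x α.graph α.root}).ncard ≤ Nat.card V := by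
      rw [← Set.ncard_univ]
      exact Set.ncard_le_ncard (Set.subset_univ _) (Set.toFinite _)
    exact_mod_cast this

lemma abs_pfreq_sub_le_one {V : Type*} [Finite V] {d : ℕ} (G H : SimpleGraph V)
    (α : Ball d) : |pfreq G α - pfreq H α| ≤ 1 := by
  rw [abs_sub_le_iff]
  constructor
  · linarith [pfreq_le_one G α, pfreq_nonneg H α]
  · linarith [pfreq_le_one H α, pfreq_nonneg G α]

lemma pfreq_diff_le {V : Type*} [Finite V] {d : ℕ} (G H : SimpleGraph V)
    (hG : DegLe G d) (hH : DegLe H d) (α : Ball d) :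
    |pfreq G α - pfreq H α| ≤
      4 * (d + 1) ^ α.rad * ((symmDiff G.edgeSet H.edgeSet).ncard : ℝ) / Nat.card V := by
  set r := α.rad
  set A := {x : V | ballIso G r x α.graph α.root}
  set B := {x : V | ballIso H r x α.graph α.root}
  set Bad := {x : V | ∃ y, G.neighborSet y ≠ H.neighborSet y ∧
      (x ∈ ballVerts G r y ∪ ballVerts H r y)}
  have hAB : ∀ x, x ∉ Bad → (x ∈ A ↔ x ∈ B) := by
    intro x hx
    have good : ∀ z, z ∈ ballVerts G r x ∪ ballVerts H r x →
        G.neighborSet z = H.neighborSet z := by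
      intro z hz
      by_contra hne
      apply hx
      refine ⟨z, hne, ?_⟩
      rcases hz with hz | hz
      · exact Or.inl (mem_ballVerts_comm.mp hz)
      · exact Or.inr (mem_ballVerts_comm.mp hz)
    exact ballIso_iff_of_good good α.graph α.root
  have hdiff1 : A \ B ⊆ Bad := by
    rintro x ⟨hA, hB⟩
    by_contra hx
    exact hB ((hAB x hx).mp hA)
  have hdiff2 : B \ A ⊆ Bad := by
    rintro x ⟨hB, hA⟩
    by_contra hx
    exact hA ((hAB x hx).mpr hB)
  have key : ∀ (S T : Set V), S \ T ⊆ Bad → S.ncard ≤ T.ncard + Bad.ncard := by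
    intro S T h
    calc S.ncard ≤ (T ∪ S \ T).ncard := by
          refine Set.ncard_le_ncard ?_ (Set.toFinite _)
          intro x hx
          by_cases hxT : x ∈ T
          · exact Or.inl hxT
          · exact Or.inr ⟨hx, hxT⟩
      _ ≤ T.ncard + (S \ T).ncard := Set.ncard_union_le _ _
      _ ≤ T.ncard + Bad.ncard := by
          have := Set.ncard_le_ncard h (Set.toFinite Bad)
          omega
  have hBad : Bad.ncard ≤ 4 * (d + 1) ^ r * (symmDiff G.edgeSet H.edgeSet).ncard :=
    badSet_ncard_le G H hG hH r
  have habs : |(A.ncard : ℝ) - B.ncard| ≤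
      (4 * (d + 1) ^ r * (symmDiff G.edgeSet H.edgeSet).ncard : ℕ) := by
    rw [abs_sub_le_iff]
    have h1 := key A B hdiff1
    have h2 := key B A hdiff2
    constructor
    · have : (A.ncard : ℝ) ≤ B.ncard + Bad.ncard := by exact_mod_cast h1
      have h3 : (Bad.ncard : ℝ) ≤ (4 * (d + 1) ^ r * (symmDiff G.edgeSet H.edgeSet).ncard : ℕ) := by
        exact_mod_cast hBad
      linarith
    · have : (B.ncard : ℝ) ≤ A.ncard + Bad.ncard := by exact_mod_cast h2
      have h3 : (Bad.ncard : ℝ) ≤ (4 * (d + 1) ^ r * (symmDiff G.edgeSet H.edgeSet).ncard : ℕ) := by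
        exact_mod_cast hBad
      linarith
  have hfreq : pfreq G α - pfreq H α = ((A.ncard : ℝ) - B.ncard) / Nat.card V := by
    unfold pfreq
    rw [div_sub_div_same]
  rw [hfreq, abs_div, abs_of_nonneg (by positivity : (0:ℝ) ≤ (Nat.card V : ℝ))]
  rcases Nat.eq_zero_or_pos (Nat.card V) with h0 | h0
  · simp [h0]
  · have hc : (0:ℝ) < Nat.card V := by exact_mod_cast h0
    rw [div_le_div_iff_of_pos_right hc]
    push_cast at habs ⊢
    exact habs

/-- **Stability Lemma.** For every `ω > 0` there is `ε > 0` such that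
any two finite graphs on the same vertex set with maximum degree at most `d` whose
edit distance is less than `ε` have statistical distance less than `ω`. -/
theorem stability_lemma {d : ℕ} (hd : 1 ≤ d) (E : ℕ → Ball d) (hE : Covers E)
    (ω : ℝ) (hω : 0 < ω) :
    ∃ ε > (0 : ℝ), ∀ (V : Type), Finite V → Nonempty V →
      ∀ (G H : SimpleGraph V), DegLe G d → DegLe H d →
      ((symmDiff G.edgeSet H.edgeSet).ncard : ℝ) / Nat.card V < ε →
      ds E G H < ω := by
  obtain ⟨N, hN⟩ : ∃ N : ℕ, (1/2 : ℝ)^N < ω/2 :=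
    exists_pow_lt_of_lt_one (by linarith) (by norm_num)
  set C : ℝ := ∑ i ∈ Finset.range N, 4 * (d+1:ℝ)^((E i).rad) with hCdef
  have hC : 0 ≤ C := Finset.sum_nonneg (fun i _ => by positivity)
  refine ⟨(ω/2)/(C+1), by positivity, ?_⟩
  intro V _ _ G H hG hH hedit
  have hgeo : Summable (fun i : ℕ => (1/2:ℝ)^(i+1)) := by
    have h0 := summable_geometric_of_lt_one (by norm_num : (0:ℝ) ≤ 1/2) (by norm_num)
    simpa [pow_succ, mul_comm] using h0.mul_right (1/2 : ℝ)
  set f : ℕ → ℝ := fun i => (1 / 2 : ℝ) ^ (i + 1) * |pfreq G (E i) - pfreq H (E i)| with hfdef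
  have hb : ∀ i, 0 ≤ f i := fun i => by positivity
  have hle : ∀ i, f i ≤ (1/2:ℝ)^(i+1) := by
    intro i
    have h1 := abs_pfreq_sub_le_one G H (E i)
    have h2 : (0:ℝ) < (1/2:ℝ)^(i+1) := by positivity
    calc f i ≤ (1/2:ℝ)^(i+1) * 1 := by
          exact mul_le_mul_of_nonneg_left h1 (le_of_lt h2)
      _ = (1/2:ℝ)^(i+1) := mul_one _
  have hsum : Summable f := by exact Summable.of_nonneg_of_le hb hle hgeo
  have hsplit : ds E G H = ∑ i ∈ Finset.range N, f i + ∑' i, f (i + N) :=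
    (Summable.sum_add_tsum_nat_add N hsum).symm
  have htail : ∑' i, f (i + N) ≤ (1/2:ℝ)^N := by
    calc ∑' i, f (i + N) ≤ ∑' i : ℕ, (1/2:ℝ)^(i + N + 1) :=
          Summable.tsum_le_tsum (fun i => hle (i + N))
            ((summable_nat_add_iff N).mpr hsum) ((summable_nat_add_iff N).mpr hgeo)
      _ = (1/2:ℝ)^(N+1) * ∑' i : ℕ, (1/2:ℝ)^i := by
          rw [← tsum_mul_left]
          exact tsum_congr fun i => by ring
      _ = (1/2:ℝ)^(N+1) * 2 := by
          rw [tsum_geometric_of_lt_one (by norm_num) (by norm_num)]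
          norm_num
      _ = (1/2:ℝ)^N := by rw [pow_succ]; ring
  have hn : (0:ℝ) < Nat.card V := by
    have := Nat.card_pos (α := V)
    exact_mod_cast this
  set m : ℝ := ((symmDiff G.edgeSet H.edgeSet).ncard : ℝ) with hmdef
  have hm : 0 ≤ m / Nat.card V := div_nonneg (Nat.cast_nonneg _) (le_of_lt hn)
  have hhead : ∑ i ∈ Finset.range N, f i ≤ C * (m / Nat.card V) := by
    rw [hCdef, Finset.sum_mul]
    refine Finset.sum_le_sum fun i _ => ?_
    have h1 := pfreq_diff_le G H hG hH (E i)
    have h2 : (1/2:ℝ)^(i+1) ≤ 1 := pow_le_one₀ (by norm_num) (by norm_num)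
    calc f i ≤ 1 * |pfreq G (E i) - pfreq H (E i)| := by
          exact mul_le_mul_of_nonneg_right h2 (abs_nonneg _)
      _ = |pfreq G (E i) - pfreq H (E i)| := one_mul _
      _ ≤ 4 * (d + 1:ℝ) ^ (E i).rad * m / Nat.card V := h1
      _ = 4 * (d + 1:ℝ) ^ (E i).rad * (m / Nat.card V) := by ring
  have hCe : C * (m / Nat.card V) < ω / 2 := by
    have h1 : C * (m / Nat.card V) ≤ C * ((ω/2)/(C+1)) :=
      mul_le_mul_of_nonneg_left (le_of_lt hedit) hC
    have h2 : C * ((ω/2)/(C+1)) < ω / 2 := by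
      rw [mul_div_assoc'] -- C * (x/(C+1)) = (C*x)/(C+1)
      rw [div_lt_iff₀ (by linarith : (0:ℝ) < C + 1)]
      nlinarith
    linarith
  rw [hsplit]
  calc ∑ i ∈ Finset.range N, f i + ∑' i, f (i + N)
      < ω / 2 + (1/2:ℝ)^N := by
        have := lt_of_le_of_lt hhead hCe
        linarith [htail]
    _ < ω / 2 + ω / 2 := by linarith
    _ = ω := by ring
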